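/- With diagonalization C₀AᵀΓ⁻¹A = S diag(μ₁,…,μ_k,0,…,0) S⁻¹ (μ_i > 0) and C(t) = C₀(E+αtAᵀΓ⁻¹AC₀)⁻¹, it holds that lim_{t→∞} (C(t)C₀⁻¹)^{1/α} ∫₀ᵗ (C(s)C₀⁻¹)^{1−1/α} ds · C₀AᵀΓ⁻¹A = S(E − E_∞)S⁻¹ = E − C_∞C₀⁻¹, where E_∞ = diag(0,…,0,1,…,1) with k zeros. -/

import Mathlib

open Matrix Filter Topology

/-- Spectral power `(C(t)C₀⁻¹)^(-p) = S diag((1+αtμᵢ)^p) S⁻¹`, defined via the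
shared diagonalization `C₀AᵀΓ⁻¹A = S diag(μ) S⁻¹`. -/
noncomputable def specPow {n : ℕ} (S : Matrix (Fin n) (Fin n) ℝ) (μ : Fin n → ℝ)
    (α p t : ℝ) : Matrix (Fin n) (Fin n) ℝ :=
  S * Matrix.diagonal (fun i => (1 + α * t * μ i) ^ (p : ℝ)) * S⁻¹

lemma diag_entry {n : ℕ} (S : Matrix (Fin n) (Fin n) ℝ) (d : Fin n → ℝ) (i j : Fin n) :
    (S * Matrix.diagonal d * S⁻¹) i j = ∑ l, S i l * d l * S⁻¹ l j := by
  rw [Matrix.mul_apply]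
  simp [Matrix.mul_diagonal]

lemma aux_deriv (α μ : ℝ) (hα : 0 < α) (hμ : 0 < μ) {s : ℝ} (hs : 0 < 1 + α * s * μ) :
    HasDerivAt (fun s => (1 + α * s * μ) ^ (1 / α : ℝ) / μ)
      ((1 + α * s * μ) ^ (1 / α - 1 : ℝ)) s := by
  have h1 : HasDerivAt (fun s : ℝ => 1 + α * s * μ) (α * μ) s := by
    simpa using (((hasDerivAt_id s).const_mul α).mul_const μ).const_add 1
  have h2 := (Real.hasDerivAt_rpow_const (p := (1 / α : ℝ)) (Or.inl hs.ne')).comp s h1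
  have h3 := h2.div_const μ
  refine h3.congr_deriv ?_
  field_simp

lemma aux_integral (α μ : ℝ) (hα : 1 ≤ α) (hμ : 0 < μ) (t : ℝ) (ht : 0 ≤ t) :
    ∫ s in (0:ℝ)..t, (1 + α * s * μ) ^ (1 / α - 1 : ℝ)
      = ((1 + α * t * μ) ^ (1 / α : ℝ) - 1) / μ := by
  have hα0 : 0 < α := lt_of_lt_of_le one_pos hα
  have hpos : ∀ s ∈ Set.uIcc (0:ℝ) t, 0 < 1 + α * s * μ := by
    intro s hs
    rw [Set.uIcc_of_le ht] at hs
    nlinarith [hs.1, mul_pos hα0 hμ]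
  rw [intervalIntegral.integral_eq_sub_of_hasDerivAt
      (fun s hs => aux_deriv α μ hα0 hμ (hpos s hs))
      (ContinuousOn.intervalIntegrable
        (ContinuousOn.rpow_const (by fun_prop) (fun s hs => Or.inl (hpos s hs).ne')))]
  simp [Real.one_rpow, sub_div]

lemma aux_tendsto (α μ : ℝ) (hα : 1 ≤ α) (hμ : 0 < μ) :
    Tendsto (fun t : ℝ => 1 - (1 + α * t * μ) ^ (-(1 / α) : ℝ)) atTop (𝓝 1) := by
  have hα0 : 0 < α := lt_of_lt_of_le one_pos hα
  have h1 : Tendsto (fun t : ℝ => 1 + α * t * μ) atTop atTop := by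
    apply tendsto_atTop_add_const_left
    exact (tendsto_id.const_mul_atTop hα0).atTop_mul_const hμ
  have h2 : Tendsto (fun t : ℝ => (1 + α * t * μ) ^ (-(1 / α) : ℝ)) atTop (𝓝 0) :=
    (tendsto_rpow_neg_atTop (by positivity)).comp h1
  simpa using tendsto_const_nhds.sub h2

theorem integral_limit {n m k : ℕ} (hk : k ≤ n) (α : ℝ) (hα : 1 ≤ α)
    (C₀ : Matrix (Fin n) (Fin n) ℝ) (hC₀ : C₀.PosDef)
    (A : Matrix (Fin m) (Fin n) ℝ)
    (Γ : Matrix (Fin m) (Fin m) ℝ) (hΓ : Γ.PosDef)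
    (S : Matrix (Fin n) (Fin n) ℝ) (μ : Fin n → ℝ)
    (hS : IsUnit S.det)
    (hμpos : ∀ i : Fin n, (i : ℕ) < k → 0 < μ i)
    (hμzero : ∀ i : Fin n, k ≤ (i : ℕ) → μ i = 0)
    (hdiag : C₀ * Aᵀ * Γ⁻¹ * A = S * Matrix.diagonal μ * S⁻¹)
    (C : ℝ → Matrix (Fin n) (Fin n) ℝ)
    (hC : ∀ t : ℝ, C t = C₀ * (1 + (α * t) • (Aᵀ * Γ⁻¹ * A * C₀))⁻¹)
    (Einf : Matrix (Fin n) (Fin n) ℝ)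
    (hEinf : Einf = Matrix.diagonal (fun i : Fin n => if (i : ℕ) < k then (0 : ℝ) else 1))
    (Cinf : Matrix (Fin n) (Fin n) ℝ) (hCinf : Cinf = S * Einf * S⁻¹ * C₀) :
    (∀ i j : Fin n,
      Tendsto
        (fun t : ℝ =>
          (specPow S μ α (-(1 / α)) t *
            Matrix.of (fun i j => ∫ s in (0:ℝ)..t, specPow S μ α (1 / α - 1) s i j) *
            (C₀ * Aᵀ * Γ⁻¹ * A)) i j)
        atTop (𝓝 ((S * (1 - Einf) * S⁻¹) i j))) ∧
    S * (1 - Einf) * S⁻¹ = 1 - Cinf * C₀⁻¹ := by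
  have hα0 : 0 < α := lt_of_lt_of_le one_pos hα
  haveI := S.invertibleOfIsUnitDet hS
  set h : Fin n → ℝ → ℝ := fun l t =>
    (1 + α * t * μ l) ^ (-(1 / α) : ℝ) *
      ((∫ s in (0:ℝ)..t, (1 + α * s * μ l) ^ (1 / α - 1 : ℝ)) * μ l) with hh
  have hdd : ∀ d₁ d₂ d₃ : Fin n → ℝ,
      (S * Matrix.diagonal d₁ * S⁻¹) * (S * Matrix.diagonal d₂ * S⁻¹) *
        (S * Matrix.diagonal d₃ * S⁻¹)
      = S * Matrix.diagonal (fun l => d₁ l * (d₂ l * d₃ l)) * S⁻¹ := by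
    intro d₁ d₂ d₃
    simp only [Matrix.mul_assoc, Matrix.inv_mul_cancel_left_of_invertible]
    rw [← Matrix.mul_assoc (Matrix.diagonal d₂) (Matrix.diagonal d₃) S⁻¹,
      Matrix.diagonal_mul_diagonal,
      ← Matrix.mul_assoc (Matrix.diagonal d₁) _ S⁻¹,
      Matrix.diagonal_mul_diagonal, ← Matrix.mul_assoc]
  have key : ∀ t : ℝ, 0 ≤ t →
      specPow S μ α (-(1 / α)) t *
        Matrix.of (fun i j => ∫ s in (0:ℝ)..t, specPow S μ α (1 / α - 1) s i j) *
        (C₀ * Aᵀ * Γ⁻¹ * A)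
      = S * Matrix.diagonal (fun l => h l t) * S⁻¹ := by
    intro t ht
    have hposn : ∀ l : Fin n, ∀ s ∈ Set.uIcc (0:ℝ) t, 0 < 1 + α * s * μ l := by
      intro l s hs
      rw [Set.uIcc_of_le ht] at hs
      rcases lt_or_ge (l : ℕ) k with hl | hl
      · nlinarith [hs.1, mul_pos hα0 (hμpos l hl)]
      · simp [hμzero l hl]
    have hM : Matrix.of (fun i j => ∫ s in (0:ℝ)..t, specPow S μ α (1 / α - 1) s i j)
        = S * Matrix.diagonal
            (fun l => ∫ s in (0:ℝ)..t, (1 + α * s * μ l) ^ (1 / α - 1 : ℝ)) * S⁻¹ := by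
      ext i j
      have hint : ∀ l ∈ Finset.univ (α := Fin n), IntervalIntegrable
          (fun s => S i l * (1 + α * s * μ l) ^ (1 / α - 1 : ℝ) * S⁻¹ l j)
          MeasureTheory.volume 0 t := by
        intro l _
        have hc : ContinuousOn (fun s : ℝ => (1 + α * s * μ l) ^ (1 / α - 1 : ℝ))
            (Set.uIcc (0:ℝ) t) :=
          ContinuousOn.rpow_const (by fun_prop) (fun s hs => Or.inl (hposn l s hs).ne')
        exact ((continuousOn_const.mul hc).mul continuousOn_const).intervalIntegrable
      simp only [Matrix.of_apply, specPow, diag_entry]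
      rw [intervalIntegral.integral_finset_sum hint]
      refine Finset.sum_congr rfl fun l _ => ?_
      rw [intervalIntegral.integral_mul_const, intervalIntegral.integral_const_mul]
    rw [hM, hdiag]
    simp only [specPow]
    exact hdd _ _ _
  have hone : (1 : Matrix (Fin n) (Fin n) ℝ) - Einf
      = Matrix.diagonal (fun i : Fin n => if (i : ℕ) < k then (1 : ℝ) else 0) := by
    subst hEinf
    rw [← Matrix.diagonal_one, Matrix.diagonal_sub]
    have : (fun i : Fin n => (1:ℝ) - if (i : ℕ) < k then (0:ℝ) else 1)
        = fun i : Fin n => if (i : ℕ) < k then (1:ℝ) else 0 := by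
      funext l; split <;> norm_num
    rw [this]
  constructor
  · intro i j
    rw [hone, diag_entry]
    have hev : ∀ᶠ t : ℝ in atTop,
        (fun t : ℝ => ∑ l, S i l * h l t * S⁻¹ l j) t
        = (specPow S μ α (-(1 / α)) t *
            Matrix.of (fun i j => ∫ s in (0:ℝ)..t, specPow S μ α (1 / α - 1) s i j) *
            (C₀ * Aᵀ * Γ⁻¹ * A)) i j := by
      filter_upwards [eventually_ge_atTop (0:ℝ)] with t ht
      rw [key t ht, diag_entry]
    apply Tendsto.congr' hev
    apply tendsto_finset_sum
    intro l _
    have hterm : Tendsto (fun t => h l t) atTop (𝓝 (if (l : ℕ) < k then (1:ℝ) else 0)) := by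
      rcases lt_or_ge (l : ℕ) k with hl | hl
      · rw [if_pos hl]
        have hμl := hμpos l hl
        apply Tendsto.congr' _ (aux_tendsto α (μ l) hα hμl)
        filter_upwards [eventually_ge_atTop (0:ℝ)] with t ht
        have hx : 0 < 1 + α * t * μ l := by nlinarith [mul_pos hα0 hμl]
        have hy : (0:ℝ) < (1 + α * t * μ l) ^ (1 / α : ℝ) := Real.rpow_pos_of_pos hx _
        rw [hh]
        simp only
        rw [aux_integral α (μ l) hα hμl t ht, Real.rpow_neg hx.le]
        field_simp
      · rw [if_neg (by omega)]
        have : (fun t => h l t) = fun _ : ℝ => (0:ℝ) := by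
          funext t; simp [hh, hμzero l hl]
        rw [this]
        exact tendsto_const_nhds
    exact (hterm.const_mul (S i l)).mul_const (S⁻¹ l j)
  · have hC₀u : IsUnit C₀.det := hC₀.det_pos.ne'.isUnit
    rw [hCinf, Matrix.mul_assoc (S * Einf * S⁻¹) C₀ C₀⁻¹,
      Matrix.mul_nonsing_inv C₀ hC₀u, Matrix.mul_one, mul_sub, mul_one, sub_mul,
      Matrix.mul_nonsing_inv S hS]
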